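/- (Theorem 1, reflection coefficients) If R is an N×N Hermitian positive definite matrix that is block Toeplitz with block size n1, then for all 0 ≤ k < l ≤ N−1: a_{k,l} = a_{k mod n1, l − (k sec n1)} and a'_{k,l} = a'_{k mod n1, l − (k sec n1)}. -/
import Mathlib


open Matrix
open scoped ComplexOrder

noncomputable section

/-- The `k`-th standard basis vector of `ℂⁿ` (zero if `k ≥ n`). -/
def eVec (n : ℕ) (k : ℕ) : Fin n → ℂ := fun j => if (j : ℕ) = k then 1 else 0

/-- `vᵀ R w`. -/
def bform {n : ℕ} (R : Matrix (Fin n) (Fin n) ℂ) (v w : Fin n → ℂ) : ℂ :=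
  v ⬝ᵥ R.mulVec w

/-- Joint recursion computing the pair `(p_{k,k+d}, q_{k,k+d})`. -/
def pqAux {n : ℕ} (R : Matrix (Fin n) (Fin n) ℂ) : ℕ → ℕ → (Fin n → ℂ) × (Fin n → ℂ)
  | 0, k => (eVec n k, eVec n k)
  | d + 1, k =>
      let p := (pqAux R d k).1
      let q := (pqAux R d (k + 1)).2
      let l := k + d + 1
      let a := bform R p (eVec n l) / bform R q (eVec n l)
      let a' := bform R q (eVec n k) / bform R p (eVec n k)
      (p - a • q, q - a' • p)

/-- The orthogonal polynomial `p_{k,l}`. -/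
def pVec {n : ℕ} (R : Matrix (Fin n) (Fin n) ℂ) (k l : ℕ) : Fin n → ℂ :=
  (pqAux R (l - k) k).1

/-- The orthogonal polynomial `q_{k,l}`. -/
def qVec {n : ℕ} (R : Matrix (Fin n) (Fin n) ℂ) (k l : ℕ) : Fin n → ℂ :=
  (pqAux R (l - k) k).2

/-- The generalized reflection coefficient `a_{k,l}`. -/
def aCoef {n : ℕ} (R : Matrix (Fin n) (Fin n) ℂ) (k l : ℕ) : ℂ :=
  bform R (pVec R k (l - 1)) (eVec n l) / bform R (qVec R (k + 1) l) (eVec n l)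

/-- The generalized reflection coefficient `a'_{k,l}`. -/
def aCoef' {n : ℕ} (R : Matrix (Fin n) (Fin n) ℂ) (k l : ℕ) : ℂ :=
  bform R (qVec R (k + 1) l) (eVec n k) / bform R (pVec R k (l - 1)) (eVec n k)

/-- `v_{k,l} = q_{k,l}ᵀ R e_l`. -/
def vSc {n : ℕ} (R : Matrix (Fin n) (Fin n) ℂ) (k l : ℕ) : ℂ :=
  bform R (qVec R k l) (eVec n l)

/-- `v'_{k,l} = p_{k,l}ᵀ R e_k`. -/
def vSc' {n : ℕ} (R : Matrix (Fin n) (Fin n) ℂ) (k l : ℕ) : ℂ :=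
  bform R (pVec R k l) (eVec n k)

-- my helpers
def shiftV (N n1 : ℕ) (v : Fin N → ℂ) : Fin N → ℂ :=
  fun j => if h : n1 ≤ (j : ℕ) then
    v ⟨(j : ℕ) - n1, Nat.lt_of_le_of_lt (Nat.sub_le _ _) j.isLt⟩ else 0

lemma shiftV_eVec (N n1 k : ℕ) : shiftV N n1 (eVec N k) = eVec N (k + n1) := by
  funext j
  unfold shiftV eVec
  rcases le_or_gt n1 (j : ℕ) with h | h
  · rw [dif_pos h]
    by_cases hj : (j : ℕ) - n1 = k
    · rw [if_pos hj, if_pos (by omega)]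
    · rw [if_neg hj, if_neg (by omega)]
  · rw [dif_neg (by omega), if_neg (by omega)]

lemma shiftV_sub_smul (N n1 : ℕ) (v w : Fin N → ℂ) (a : ℂ) :
    shiftV N n1 (v - a • w) = shiftV N n1 v - a • shiftV N n1 w := by
  funext j
  simp only [shiftV, Pi.sub_apply, Pi.smul_apply, smul_eq_mul]
  split
  · rfl
  · simp

lemma pqAux_succ {n : ℕ} (R : Matrix (Fin n) (Fin n) ℂ) (d k : ℕ) :
    pqAux R (d + 1) k =
      ((pqAux R d k).1 -
          (bform R (pqAux R d k).1 (eVec n (k + d + 1)) /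
            bform R (pqAux R d (k + 1)).2 (eVec n (k + d + 1))) • (pqAux R d (k + 1)).2,
        (pqAux R d (k + 1)).2 -
          (bform R (pqAux R d (k + 1)).2 (eVec n k) /
            bform R (pqAux R d k).1 (eVec n k)) • (pqAux R d k).1) := rfl

lemma pqAux_support {N : ℕ} (R : Matrix (Fin N) (Fin N) ℂ) :
    ∀ d k (j : Fin N), ((j : ℕ) < k ∨ k + d < (j : ℕ)) →
      (pqAux R d k).1 j = 0 ∧ (pqAux R d k).2 j = 0 := by
  intro d
  induction d with
  | zero =>
    intro k j hj
    constructor <;> simp [pqAux, eVec, if_neg (show ¬ (j:ℕ) = k by omega)]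
  | succ d ih =>
    intro k j hj
    have h1 := ih k j (by omega)
    have h2 := ih (k + 1) j (by omega)
    rw [pqAux_succ]
    constructor <;>
      simp [Pi.sub_apply, Pi.smul_apply, h1.1, h1.2, h2.1, h2.2]

lemma finSum_eq_rangeSum {N : ℕ} (g : Fin N → ℂ) :
    ∑ i : Fin N, g i = ∑ i ∈ Finset.range N, (if h : i < N then g ⟨i, h⟩ else 0) := by
  rw [← Fin.sum_univ_eq_sum_range (fun i => if h : i < N then g ⟨i, h⟩ else 0)]
  exact Finset.sum_congr rfl fun i _ => by rw [dif_pos i.isLt]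

lemma sum_shift_range {N n1 : ℕ} (hn : n1 ≤ N) (f : ℕ → ℂ)
    (h0 : ∀ i, i < n1 → f i = 0) (h1 : ∀ i, N ≤ i + n1 → i < N → f (i + n1) = 0) :
    ∑ i ∈ Finset.range N, f i = ∑ i ∈ Finset.range N, f (i + n1) := by
  have hz : ∑ i ∈ Finset.Ico 0 n1, f i = 0 :=
    Finset.sum_eq_zero fun i hi => h0 i (Finset.mem_Ico.mp hi).2
  have step1 : ∑ i ∈ Finset.range N, f i = ∑ i ∈ Finset.range (N - n1), f (n1 + i) := by
    rw [Finset.range_eq_Ico, ← Finset.sum_Ico_consecutive _ (Nat.zero_le n1) hn, hz,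
      zero_add, Finset.sum_Ico_eq_sum_range, Finset.range_eq_Ico]
  have hsub : ∑ i ∈ Finset.range N, f (i + n1) = ∑ i ∈ Finset.range (N - n1), f (i + n1) :=
    (Finset.sum_subset (Finset.range_subset_range.mpr (Nat.sub_le N n1))
      (fun i hi hni => h1 i (by simp only [Finset.mem_range] at hi hni; omega)
        (Finset.mem_range.mp hi))).symm
  rw [step1, hsub]
  exact Finset.sum_congr rfl fun i _ => by rw [Nat.add_comm n1 i]

lemma bform_eq_sum {N : ℕ} (R : Matrix (Fin N) (Fin N) ℂ) (v w : Fin N → ℂ)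
    (V W : ℕ → ℂ) (RN : ℕ → ℕ → ℂ)
    (hV : ∀ i (h : i < N), V i = v ⟨i, h⟩)
    (hW : ∀ j (h : j < N), W j = w ⟨j, h⟩)
    (hRN : ∀ i j (hi : i < N) (hj : j < N), RN i j = R ⟨i, hi⟩ ⟨j, hj⟩) :
    bform R v w = ∑ i ∈ Finset.range N, ∑ j ∈ Finset.range N, V i * (RN i j * W j) := by
  simp only [bform, mulVec, dotProduct, Finset.mul_sum]
  rw [finSum_eq_rangeSum]
  refine Finset.sum_congr rfl fun i hi => ?_
  rw [dif_pos (Finset.mem_range.mp hi), finSum_eq_rangeSum]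
  refine Finset.sum_congr rfl fun j hj => ?_
  rw [dif_pos (Finset.mem_range.mp hj),
    hV i (Finset.mem_range.mp hi), hW j (Finset.mem_range.mp hj),
    hRN i j (Finset.mem_range.mp hi) (Finset.mem_range.mp hj)]

lemma bform_shiftV (n1 n2 : ℕ) (h2 : 1 ≤ n2)
    (R : Matrix (Fin (n1 * n2)) (Fin (n1 * n2)) ℂ)
    (hBT : ∀ (i j : ℕ) (hi : i + n1 < n1 * n2) (hj : j + n1 < n1 * n2),
      R ⟨i + n1, hi⟩ ⟨j + n1, hj⟩ =
        R ⟨i, Nat.lt_of_le_of_lt (Nat.le_add_right i n1) hi⟩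
          ⟨j, Nat.lt_of_le_of_lt (Nat.le_add_right j n1) hj⟩)
    (v w : Fin (n1 * n2) → ℂ)
    (hv : ∀ j : Fin (n1 * n2), v j ≠ 0 → (j : ℕ) + n1 < n1 * n2)
    (hw : ∀ j : Fin (n1 * n2), w j ≠ 0 → (j : ℕ) + n1 < n1 * n2) :
    bform R (shiftV (n1 * n2) n1 v) (shiftV (n1 * n2) n1 w) = bform R v w := by
  have hn : n1 ≤ n1 * n2 := by
    calc n1 = n1 * 1 := (mul_one n1).symm
    _ ≤ n1 * n2 := Nat.mul_le_mul_left n1 h2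
  set V : ℕ → ℂ := fun i => if h : i < n1 * n2 then v ⟨i, h⟩ else 0 with hVdef
  set W : ℕ → ℂ := fun i => if h : i < n1 * n2 then w ⟨i, h⟩ else 0 with hWdef
  set RN : ℕ → ℕ → ℂ := fun i j =>
    if h : i < n1 * n2 then if h' : j < n1 * n2 then R ⟨i, h⟩ ⟨j, h'⟩ else 0 else 0 with hRNdef
  set SV : ℕ → ℂ := fun i => if n1 ≤ i then V (i - n1) else 0 with hSVdef
  set SW : ℕ → ℂ := fun i => if n1 ≤ i then W (i - n1) else 0 with hSWdef
  have hV : ∀ i (h : i < n1 * n2), V i = v ⟨i, h⟩ := fun i h => dif_pos h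
  have hW : ∀ j (h : j < n1 * n2), W j = w ⟨j, h⟩ := fun j h => dif_pos h
  have hRN : ∀ i j (hi : i < n1 * n2) (hj : j < n1 * n2), RN i j = R ⟨i, hi⟩ ⟨j, hj⟩ := by
    intro i j hi hj; simp only [hRNdef, dif_pos hi, dif_pos hj]
  have hSV : ∀ i (h : i < n1 * n2), SV i = shiftV (n1 * n2) n1 v ⟨i, h⟩ := by
    intro i h
    simp only [hSVdef, shiftV]
    by_cases hi : n1 ≤ i
    · rw [if_pos hi, dif_pos hi, hV (i - n1) (by omega)]
    · rw [if_neg hi, dif_neg hi]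
  have hSW : ∀ i (h : i < n1 * n2), SW i = shiftV (n1 * n2) n1 w ⟨i, h⟩ := by
    intro i h
    simp only [hSWdef, shiftV]
    by_cases hi : n1 ≤ i
    · rw [if_pos hi, dif_pos hi, hW (i - n1) (by omega)]
    · rw [if_neg hi, dif_neg hi]
  have hSVadd : ∀ i, SV (i + n1) = V i := by
    intro i
    simp only [hSVdef, if_pos (Nat.le_add_left n1 i), Nat.add_sub_cancel]
  have hSWadd : ∀ i, SW (i + n1) = W i := by
    intro i
    simp only [hSWdef, if_pos (Nat.le_add_left n1 i), Nat.add_sub_cancel]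
  have hV0 : ∀ i, n1 * n2 ≤ i + n1 → V i = 0 := by
    intro i h
    simp only [hVdef]
    split
    · next hh =>
        by_contra hne
        have hlt : i + n1 < n1 * n2 := hv ⟨i, hh⟩ hne
        omega
    · rfl
  have hW0 : ∀ j, n1 * n2 ≤ j + n1 → W j = 0 := by
    intro j h
    simp only [hWdef]
    split
    · next hh =>
        by_contra hne
        have hlt : j + n1 < n1 * n2 := hw ⟨j, hh⟩ hne
        omega
    · rfl
  have hSV0 : ∀ i, i < n1 → SV i = 0 := by
    intro i h; simp only [hSVdef, if_neg (by omega : ¬ n1 ≤ i)]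
  have hSW0 : ∀ i, i < n1 → SW i = 0 := by
    intro i h; simp only [hSWdef, if_neg (by omega : ¬ n1 ≤ i)]
  rw [bform_eq_sum R (shiftV (n1 * n2) n1 v) (shiftV (n1 * n2) n1 w) SV SW RN hSV hSW hRN,
    bform_eq_sum R v w V W RN hV hW hRN]
  rw [sum_shift_range hn (fun i => ∑ j ∈ Finset.range (n1 * n2), SV i * (RN i j * SW j))
    (fun i hi => Finset.sum_eq_zero fun j _ => by
      show SV i * (RN i j * SW j) = 0
      rw [hSV0 i hi, zero_mul])
    (fun i hi hi2 => Finset.sum_eq_zero fun j _ => by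
      show SV (i + n1) * (RN (i + n1) j * SW j) = 0
      rw [hSVadd i, hV0 i hi, zero_mul])]
  refine Finset.sum_congr rfl fun i hi => ?_
  have hiN : i < n1 * n2 := Finset.mem_range.mp hi
  rw [sum_shift_range hn (fun j => SV (i + n1) * (RN (i + n1) j * SW j))
    (fun j hj => by
      show SV (i + n1) * (RN (i + n1) j * SW j) = 0
      rw [hSW0 j hj, mul_zero, mul_zero])
    (fun j hj hj2 => by
      show SV (i + n1) * (RN (i + n1) (j + n1) * SW (j + n1)) = 0
      rw [hSWadd j, hW0 j hj, mul_zero, mul_zero])]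
  refine Finset.sum_congr rfl fun j hj => ?_
  have hjN : j < n1 * n2 := Finset.mem_range.mp hj
  rw [hSVadd i, hSWadd j]
  by_cases hVi : V i = 0
  · rw [hVi, zero_mul, zero_mul]
  by_cases hWj : W j = 0
  · rw [hWj, mul_zero, mul_zero, mul_zero, mul_zero]
  have hi1 : i + n1 < n1 * n2 := by
    have := hv ⟨i, hiN⟩ (by rw [← hV i hiN]; exact hVi)
    exact this
  have hj1 : j + n1 < n1 * n2 := by
    have := hw ⟨j, hjN⟩ (by rw [← hW j hjN]; exact hWj)
    exact this
  rw [hRN (i + n1) (j + n1) hi1 hj1, hRN i j hiN hjN, hBT i j hi1 hj1]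

lemma eVec_support {N k : ℕ} (j : Fin N) (h : eVec N k j ≠ 0) : (j : ℕ) = k := by
  by_contra hc
  exact h (if_neg hc)

lemma pqAux_shift (n1 n2 : ℕ) (h2 : 1 ≤ n2)
    (R : Matrix (Fin (n1 * n2)) (Fin (n1 * n2)) ℂ)
    (hBT : ∀ (i j : ℕ) (hi : i + n1 < n1 * n2) (hj : j + n1 < n1 * n2),
      R ⟨i + n1, hi⟩ ⟨j + n1, hj⟩ =
        R ⟨i, Nat.lt_of_le_of_lt (Nat.le_add_right i n1) hi⟩
          ⟨j, Nat.lt_of_le_of_lt (Nat.le_add_right j n1) hj⟩) :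
    ∀ d k, k + d + n1 < n1 * n2 →
      (pqAux R d (k + n1)).1 = shiftV (n1 * n2) n1 (pqAux R d k).1 ∧
      (pqAux R d (k + n1)).2 = shiftV (n1 * n2) n1 (pqAux R d k).2 := by
  intro d
  induction d with
  | zero =>
    intro k _
    exact ⟨(shiftV_eVec _ _ _).symm, (shiftV_eVec _ _ _).symm⟩
  | succ d ih =>
    intro k hk
    have hp := ih k (by omega)
    have hq := ih (k + 1) (by omega)
    have hq2 : (pqAux R d (k + n1 + 1)).2 = shiftV (n1 * n2) n1 (pqAux R d (k + 1)).2 := by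
      rw [show k + n1 + 1 = (k + 1) + n1 by ring]; exact hq.2
    have hsp : ∀ jj : Fin (n1 * n2), (pqAux R d k).1 jj ≠ 0 → (jj : ℕ) + n1 < n1 * n2 := by
      intro jj hjj
      by_contra hc
      exact hjj (pqAux_support R d k jj (by omega)).1
    have hsq : ∀ jj : Fin (n1 * n2), (pqAux R d (k + 1)).2 jj ≠ 0 → (jj : ℕ) + n1 < n1 * n2 := by
      intro jj hjj
      by_contra hc
      exact hjj (pqAux_support R d (k + 1) jj (by omega)).2
    have hseL : ∀ jj : Fin (n1 * n2), eVec (n1 * n2) (k + d + 1) jj ≠ 0 →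
        (jj : ℕ) + n1 < n1 * n2 := by
      intro jj hjj
      have := eVec_support jj hjj
      omega
    have hseK : ∀ jj : Fin (n1 * n2), eVec (n1 * n2) k jj ≠ 0 → (jj : ℕ) + n1 < n1 * n2 := by
      intro jj hjj
      have := eVec_support jj hjj
      omega
    have eL : eVec (n1 * n2) (k + n1 + d + 1) = shiftV (n1 * n2) n1 (eVec (n1 * n2) (k + d + 1)) := by
      rw [shiftV_eVec, show k + d + 1 + n1 = k + n1 + d + 1 by omega]
    have eK : eVec (n1 * n2) (k + n1) = shiftV (n1 * n2) n1 (eVec (n1 * n2) k) :=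
      (shiftV_eVec _ _ _).symm
    have hBPl := bform_shiftV n1 n2 h2 R hBT (pqAux R d k).1 (eVec (n1 * n2) (k + d + 1)) hsp hseL
    have hBQl := bform_shiftV n1 n2 h2 R hBT (pqAux R d (k + 1)).2 (eVec (n1 * n2) (k + d + 1)) hsq hseL
    have hBQk := bform_shiftV n1 n2 h2 R hBT (pqAux R d (k + 1)).2 (eVec (n1 * n2) k) hsq hseK
    have hBPk := bform_shiftV n1 n2 h2 R hBT (pqAux R d k).1 (eVec (n1 * n2) k) hsp hseK
    constructor
    · rw [pqAux_succ R d (k + n1), pqAux_succ R d k]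
      dsimp only
      rw [shiftV_sub_smul, hp.1, hq2, eL, hBPl, hBQl]
    · rw [pqAux_succ R d (k + n1), pqAux_succ R d k]
      dsimp only
      rw [shiftV_sub_smul, hp.1, hq2, eK, hBQk, hBPk]

lemma aCoef_shift (n1 n2 : ℕ) (h2 : 1 ≤ n2)
    (R : Matrix (Fin (n1 * n2)) (Fin (n1 * n2)) ℂ)
    (hBT : ∀ (i j : ℕ) (hi : i + n1 < n1 * n2) (hj : j + n1 < n1 * n2),
      R ⟨i + n1, hi⟩ ⟨j + n1, hj⟩ =
        R ⟨i, Nat.lt_of_le_of_lt (Nat.le_add_right i n1) hi⟩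
          ⟨j, Nat.lt_of_le_of_lt (Nat.le_add_right j n1) hj⟩)
    (k l : ℕ) (hkl : k < l) (hl : l + n1 < n1 * n2) :
    aCoef R (k + n1) (l + n1) = aCoef R k l ∧
    aCoef' R (k + n1) (l + n1) = aCoef' R k l := by
  have hd1 := pqAux_shift n1 n2 h2 R hBT (l - 1 - k) k (by omega)
  have hd2 := pqAux_shift n1 n2 h2 R hBT (l - (k + 1)) (k + 1) (by omega)
  have hsp : ∀ jj : Fin (n1 * n2), (pqAux R (l - 1 - k) k).1 jj ≠ 0 →
      (jj : ℕ) + n1 < n1 * n2 := by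
    intro jj hjj
    by_contra hc
    exact hjj (pqAux_support R (l - 1 - k) k jj (by omega)).1
  have hsq : ∀ jj : Fin (n1 * n2), (pqAux R (l - (k + 1)) (k + 1)).2 jj ≠ 0 →
      (jj : ℕ) + n1 < n1 * n2 := by
    intro jj hjj
    by_contra hc
    exact hjj (pqAux_support R (l - (k + 1)) (k + 1) jj (by omega)).2
  have hseL : ∀ jj : Fin (n1 * n2), eVec (n1 * n2) l jj ≠ 0 → (jj : ℕ) + n1 < n1 * n2 := by
    intro jj hjj
    have := eVec_support jj hjj
    omega
  have hseK : ∀ jj : Fin (n1 * n2), eVec (n1 * n2) k jj ≠ 0 → (jj : ℕ) + n1 < n1 * n2 := by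
    intro jj hjj
    have := eVec_support jj hjj
    omega
  have eL : eVec (n1 * n2) (l + n1) = shiftV (n1 * n2) n1 (eVec (n1 * n2) l) :=
    (shiftV_eVec _ _ _).symm
  have eK : eVec (n1 * n2) (k + n1) = shiftV (n1 * n2) n1 (eVec (n1 * n2) k) :=
    (shiftV_eVec _ _ _).symm
  have hBPl := bform_shiftV n1 n2 h2 R hBT (pqAux R (l - 1 - k) k).1 (eVec (n1 * n2) l) hsp hseL
  have hBQl := bform_shiftV n1 n2 h2 R hBT (pqAux R (l - (k + 1)) (k + 1)).2 (eVec (n1 * n2) l) hsq hseL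
  have hBQk := bform_shiftV n1 n2 h2 R hBT (pqAux R (l - (k + 1)) (k + 1)).2 (eVec (n1 * n2) k) hsq hseK
  have hBPk := bform_shiftV n1 n2 h2 R hBT (pqAux R (l - 1 - k) k).1 (eVec (n1 * n2) k) hsp hseK
  unfold aCoef aCoef' pVec qVec
  rw [show l + n1 - 1 - (k + n1) = l - 1 - k by omega,
    show l + n1 - (k + n1 + 1) = l - (k + 1) by omega,
    show k + n1 + 1 = (k + 1) + n1 by omega,
    show l - 1 - k = l - 1 - k from rfl,
    hd1.1, hd2.2, eL, eK, hBPl, hBQl, hBQk, hBPk]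
  exact ⟨rfl, rfl⟩

/-- Theorem 1 (reflection coefficients): for a Hermitian positive definite block-Toeplitz
matrix with block size `n1`, `a_{k,l} = a_{k mod n1, l - (k sec n1)}` and likewise for `a'`,
where `k sec n1 = n1 * (k / n1)`. -/
theorem stmt11 (n1 n2 : ℕ) (h1 : 1 ≤ n1) (h2 : 1 ≤ n2)
    (R : Matrix (Fin (n1 * n2)) (Fin (n1 * n2)) ℂ) (hR : R.PosDef)
    (hBT : ∀ (i j : ℕ) (hi : i + n1 < n1 * n2) (hj : j + n1 < n1 * n2),
      R ⟨i + n1, hi⟩ ⟨j + n1, hj⟩ =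
        R ⟨i, Nat.lt_of_le_of_lt (Nat.le_add_right i n1) hi⟩
          ⟨j, Nat.lt_of_le_of_lt (Nat.le_add_right j n1) hj⟩) :
    ∀ k l : ℕ, k < l → l ≤ n1 * n2 - 1 →
      aCoef R k l = aCoef R (k % n1) (l - n1 * (k / n1)) ∧
      aCoef' R k l = aCoef' R (k % n1) (l - n1 * (k / n1)) := by
  intro k
  induction k using Nat.strong_induction_on with
  | _ k ih =>
    intro l hkl hl
    by_cases hk : k < n1
    · rw [Nat.mod_eq_of_lt hk, Nat.div_eq_of_lt hk, Nat.mul_zero, Nat.sub_zero]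
      exact ⟨rfl, rfl⟩
    · push_neg at hk
      have hN1 : 1 ≤ n1 * n2 := Nat.one_le_iff_ne_zero.mpr (by positivity)
      obtain ⟨k0, rfl⟩ : ∃ k0, k = k0 + n1 := ⟨k - n1, by omega⟩
      obtain ⟨l0, rfl⟩ : ∃ l0, l = l0 + n1 := ⟨l - n1, by omega⟩
      have hE := aCoef_shift n1 n2 h2 R hBT k0 l0 (by omega) (by omega)
      have hih := ih k0 (by omega) l0 (by omega) (by omega)
      have hmod : (k0 + n1) % n1 = k0 % n1 := Nat.add_mod_right k0 n1
      have hdiv : (k0 + n1) / n1 = k0 / n1 + 1 := Nat.add_div_right k0 (by omega)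
      have hmle : n1 * (k0 / n1) ≤ k0 := by
        rw [mul_comm]
        exact Nat.div_mul_le_self k0 n1
      have hsub : l0 + n1 - n1 * (k0 / n1 + 1) = l0 - n1 * (k0 / n1) := by
        have : n1 * (k0 / n1 + 1) = n1 * (k0 / n1) + n1 := by ring
        omega
      rw [hmod, hdiv, hsub]
      exact ⟨hE.1.trans hih.1, hE.2.trans hih.2⟩
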